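/- There does not exist a triple of pairwise orthogonal unit vectors φ₁, φ₂, φ₃ in ℂ⁴ such that for all i ≠ j and all M ∈ 𝔏_π, ⟨φ_j|M|φ_i⟩ = 0 and ⟨φ_i|M|φ_i⟩ = ⟨φ_j|M|φ_j⟩. -/

import Mathlib

open Matrix Complex Finset

/-- The subspace `𝔏_π` of `M₄(ℂ)`. -/
def LsetPi : Set (Matrix (Fin 4) (Fin 4) ℂ) :=
  {M | ∃ a b c d : ℂ,
    M = !![a, b, Complex.I * c, d;
           b, a, d, -Complex.I * c;
           -Complex.I * c, d, a, b;
           d, Complex.I * c, b, a]}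

/-- A vector with zero self inner product is zero. -/
lemma selfdot_eq_zero {n : ℕ} {v : Fin n → ℂ} (h : star v ⬝ᵥ v = 0) : v = 0 := by
  have hv : star v ⬝ᵥ v = ((∑ k, Complex.normSq (v k) : ℝ) : ℂ) := by
    simp [dotProduct, Complex.normSq_eq_conj_mul_self]
  rw [hv, Complex.ofReal_eq_zero] at h
  have := (Finset.sum_eq_zero_iff_of_nonneg (fun k _ => Complex.normSq_nonneg (v k))).mp h
  funext k
  exact Complex.normSq_eq_zero.mp (this k (Finset.mem_univ k))

/-- Pairwise orthogonal nonzero vectors: cardinality bound. -/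
lemma ortho_card_le {n m : ℕ} (v : Fin m → Fin n → ℂ)
    (hnz : ∀ i, v i ≠ 0)
    (ho : ∀ i j, i ≠ j → star (v i) ⬝ᵥ v j = 0) : m ≤ n := by
  have hli : LinearIndependent ℂ v := by
    rw [linearIndependent_iff']
    intro s c hsum j hj
    have hswap : star (v j) ⬝ᵥ (∑ i ∈ s, c i • v i) = ∑ i ∈ s, c i * (star (v j) ⬝ᵥ v i) := by
      simp only [dotProduct, Finset.sum_apply, Pi.smul_apply, smul_eq_mul,
        Finset.mul_sum]
      rw [Finset.sum_comm]
      exact Finset.sum_congr rfl fun i _ => Finset.sum_congr rfl fun k _ => by ring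
    have h0 : ∑ i ∈ s, c i * (star (v j) ⬝ᵥ v i) = 0 := by rw [← hswap, hsum]; simp
    have h1 : ∀ i ∈ s, i ≠ j → c i * (star (v j) ⬝ᵥ v i) = 0 := by
      intro i _ hij
      rw [ho j i (Ne.symm hij), mul_zero]
    rw [Finset.sum_eq_single_of_mem j hj (fun i hi hij => h1 i hi hij)] at h0
    rcases mul_eq_zero.mp h0 with h | h
    · exact h
    · exact absurd (selfdot_eq_zero h) (hnz j)
  have := hli.fintype_card_le_finrank
  simpa [Module.finrank_fin_fun] using this

set_option maxHeartbeats 1600000 in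
theorem stmt_9 :
    ¬ ∃ φ : Fin 3 → Fin 4 → ℂ,
      (∀ i, ∑ k, ‖φ i k‖ ^ 2 = 1) ∧
      (∀ i j, i ≠ j → star (φ j) ⬝ᵥ (φ i) = 0) ∧
      (∀ i j, i ≠ j → ∀ M ∈ LsetPi,
        star (φ j) ⬝ᵥ M.mulVec (φ i) = 0 ∧
        star (φ i) ⬝ᵥ M.mulVec (φ i) = star (φ j) ⬝ᵥ M.mulVec (φ j)) := by
  rintro ⟨φ, hnorm, horth, hM⟩
  -- the matrix B (a = c = d = 0, b = 1)
  set B : Matrix (Fin 4) (Fin 4) ℂ := !![0,1,0,0;1,0,0,0;0,0,0,1;0,0,1,0] with hBdef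
  have hBmem : B ∈ LsetPi := by
    refine ⟨0, 1, 0, 0, ?_⟩
    ext i j
    fin_cases i <;> fin_cases j <;> simp [hBdef]
  have hBv : ∀ x : Fin 4 → ℂ, B.mulVec x = ![x 1, x 0, x 3, x 2] := by
    intro x
    funext k
    fin_cases k <;>
      simp [hBdef, Matrix.mulVec, dotProduct, Fin.sum_univ_four]
  -- self-adjointness of B and B² = 1
  have hadj : ∀ x w : Fin 4 → ℂ, star (B.mulVec x) ⬝ᵥ w = star x ⬝ᵥ B.mulVec w := by
    intro x w
    simp [hBv, dotProduct, Fin.sum_univ_four]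
    ring
  have hBB : ∀ x : Fin 4 → ℂ, B.mulVec (B.mulVec x) = x := by
    intro x
    funext k
    fin_cases k <;> simp [hBv]
  -- normalization
  have hnorm' : ∀ i, star (φ i) ⬝ᵥ φ i = 1 := by
    intro i
    have h1 := hnorm i
    have hterm : ∀ z : ℂ, star z * z = ((‖z‖ ^ 2 : ℝ) : ℂ) := by
      intro z
      rw [RCLike.star_def, mul_comm, Complex.mul_conj, Complex.normSq_eq_norm_sq]
    have : star (φ i) ⬝ᵥ φ i = ((∑ k, ‖φ i k‖ ^ 2 : ℝ) : ℂ) := by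
      rw [show (((∑ k, ‖φ i k‖ ^ 2 : ℝ)) : ℂ) = ∑ k, ((‖φ i k‖ ^ 2 : ℝ) : ℂ) by
        push_cast; rfl]
      simp only [dotProduct, Pi.star_apply, hterm]
    rw [this, h1]; norm_num
  set β : ℂ := star (φ 0) ⬝ᵥ B.mulVec (φ 0) with hβdef
  have hdiag : ∀ i, star (φ i) ⬝ᵥ B.mulVec (φ i) = β := by
    intro i
    fin_cases i
    · rfl
    · exact (hM 1 0 (by decide) B hBmem).2
    · exact (hM 2 0 (by decide) B hBmem).2
  have hoffB : ∀ i j, i ≠ j → star (φ j) ⬝ᵥ B.mulVec (φ i) = 0 :=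
    fun i j h => (hM i j h B hBmem).1
  -- the residual vectors
  set r : Fin 3 → Fin 4 → ℂ := fun i => B.mulVec (φ i) - β • φ i with hrdef
  have hφr : ∀ i j : Fin 3, star (φ j) ⬝ᵥ r i = 0 := by
    intro i j
    rw [hrdef]
    rw [dotProduct_sub, dotProduct_smul, smul_eq_mul]
    by_cases h : i = j
    · subst h
      rw [hdiag, hnorm']
      ring
    · rw [hoffB i j (fun hh => h hh), horth i j (fun hh => h hh)]
      ring
  have hrφ : ∀ i j : Fin 3, star (r i) ⬝ᵥ φ j = 0 := by
    intro i j
    have := hφr i j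
    rw [Matrix.star_dotProduct] at this
    simpa using congrArg star this
  have hkey : ∀ i j : Fin 3, star (r j) ⬝ᵥ r i =
      star (φ j) ⬝ᵥ φ i - β * (star (φ j) ⬝ᵥ B.mulVec (φ i)) := by
    intro i j
    have hstars : star (r j) = star (B.mulVec (φ j)) - star (β • φ j) := by
      rw [hrdef]; funext k; simp
    rw [hstars, sub_dotProduct]
    have h2 : star (β • φ j) ⬝ᵥ r i = 0 := by
      have : star (β • φ j) = (starRingEnd ℂ β) • star (φ j) := by
        funext k; simp [mul_comm]
      rw [this, smul_dotProduct, hφr i j, smul_zero]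
    rw [h2, sub_zero, hadj]
    have h3 : B.mulVec (r i) = φ i - β • B.mulVec (φ i) := by
      rw [hrdef]
      rw [Matrix.mulVec_sub, hBB, Matrix.mulVec_smul]
    rw [h3, dotProduct_sub, dotProduct_smul, smul_eq_mul]
  have hrr_off : ∀ i j : Fin 3, i ≠ j → star (r j) ⬝ᵥ r i = 0 := by
    intro i j h
    rw [hkey i j, horth i j h, hoffB i j h]
    ring
  have hrr_diag : ∀ i : Fin 3, star (r i) ⬝ᵥ r i = 1 - β ^ 2 := by
    intro i
    rw [hkey i i, hnorm' i, hdiag i]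
    ring
  clear_value B β r
  by_cases hb : β ^ 2 = 1
  · -- all residuals vanish; φ's are eigenvectors of B
    have hr0 : ∀ i, r i = 0 := by
      intro i
      apply selfdot_eq_zero
      rw [hrr_diag i, hb, sub_self]
    have heig : ∀ i, B.mulVec (φ i) = β • φ i := by
      intro i
      have := hr0 i
      rw [hrdef] at this
      exact sub_eq_zero.mp this
    have h1 : ∀ i : Fin 3, φ i 1 = β * φ i 0 := by
      intro i
      have := congrFun (heig i) 0
      simpa [hBv] using this
    have h3 : ∀ i : Fin 3, φ i 3 = β * φ i 2 := by
      intro i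
      have := congrFun (heig i) 2
      simpa [hBv] using this
    have hcb : (starRingEnd ℂ) β * β = 1 := by
      have : (β - 1) * (β + 1) = 0 := by ring_nf; linear_combination hb - 1
      rcases mul_eq_zero.mp this with h | h
      · have hβ1 : β = 1 := by linear_combination h
        rw [hβ1]; simp
      · have hβ1 : β = -1 := by linear_combination h
        rw [hβ1]; simp
    set ψ : Fin 3 → Fin 2 → ℂ := fun i => ![φ i 0, φ i 2] with hψdef
    have hdot2 : ∀ i j : Fin 3, star (φ j) ⬝ᵥ φ i = 2 * (star (ψ j) ⬝ᵥ ψ i) := by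
      intro i j
      simp only [dotProduct, Fin.sum_univ_four, Fin.sum_univ_two, hψdef,
        Pi.star_apply, Matrix.cons_val_zero, Matrix.cons_val_one, Matrix.head_cons]
      rw [h1 i, h1 j, h3 i, h3 j]
      simp only [RCLike.star_def, _root_.map_mul]
      linear_combination ((starRingEnd ℂ) (φ j 0) * φ i 0 +
        (starRingEnd ℂ) (φ j 2) * φ i 2) * hcb
    have hψnz : ∀ i, ψ i ≠ 0 := by
      intro i hzero
      have : star (ψ i) ⬝ᵥ ψ i = 0 := by rw [hzero]; simp
      have h2 := hdot2 i i
      rw [hnorm' i, this] at h2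
      norm_num at h2
    have hψo : ∀ i j : Fin 3, i ≠ j → star (ψ i) ⬝ᵥ ψ j = 0 := by
      intro i j h
      have h2 := hdot2 j i
      rw [horth j i (Ne.symm h)] at h2
      linear_combination (-1/2 : ℂ) * h2
    have := ortho_card_le ψ hψnz hψo
    norm_num at this
  · -- residuals are nonzero: six pairwise orthogonal nonzero vectors in ℂ⁴
    have hrnz : ∀ i, r i ≠ 0 := by
      intro i hzero
      have : star (r i) ⬝ᵥ r i = 0 := by rw [hzero]; simp
      rw [hrr_diag i] at this
      exact hb (by linear_combination -this)
    have hφnz : ∀ i, φ i ≠ 0 := by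
      intro i hzero
      have : star (φ i) ⬝ᵥ φ i = 0 := by rw [hzero]; simp
      rw [hnorm' i] at this
      norm_num at this
    have hvnz : ∀ i : Fin 6,
        (fun i : Fin 6 => if i.val = 0 then φ 0 else if i.val = 1 then φ 1
          else if i.val = 2 then φ 2 else if i.val = 3 then r 0
          else if i.val = 4 then r 1 else r 2) i ≠ 0 := by
      intro i
      fin_cases i <;>
        first | exact hφnz _ | exact hrnz _
    have hvo : ∀ i j : Fin 6, i ≠ j →
        star ((fun i : Fin 6 => if i.val = 0 then φ 0 else if i.val = 1 then φ 1
          else if i.val = 2 then φ 2 else if i.val = 3 then r 0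
          else if i.val = 4 then r 1 else r 2) i) ⬝ᵥ
        ((fun i : Fin 6 => if i.val = 0 then φ 0 else if i.val = 1 then φ 1
          else if i.val = 2 then φ 2 else if i.val = 3 then r 0
          else if i.val = 4 then r 1 else r 2) j) = 0 := by
      intro i j hij
      fin_cases i <;> fin_cases j <;>
        first
          | exact absurd rfl hij
          | exact horth _ _ (by decide)
          | exact hφr _ _
          | exact hrφ _ _
          | exact hrr_off _ _ (by decide)
    have := ortho_card_le _ hvnz hvo
    norm_num at this
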